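/- Every simple connected series-parallel matroid on a nonempty ground set of size n has rank at least ⌈(n+1)/2⌉; equivalently, in any construction of a simple series-parallel matroid from U_{1,1} by series and parallel extensions, the number of series extensions is at least the number of parallel extensions. -/

import Mathlib

open Matroid Set Polynomial

variable {α β : Type*}

/-- Rank of a set in a matroid: size of the largest independent subset. -/
noncomputable def Matroid.rkSet (M : Matroid α) (X : Set α) : ℕ :=
  sSup {n | ∃ I, M.Indep I ∧ I ⊆ X ∧ I.ncard = n}

/-- Rank of a matroid. -/
noncomputable def Matroid.rank (M : Matroid α) : ℕ := M.rkSet M.E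

/-- Deletion of a set. -/
def Matroid.del (M : Matroid α) (D : Set α) : Matroid α := M ↾ (M.E \ D)

/-- Contraction of a set, defined by duality. -/
def Matroid.ctr (M : Matroid α) (C : Set α) : Matroid α := ((M✶).del C)✶

/-- A circuit: a minimal dependent set. -/
def Matroid.IsCct (M : Matroid α) (C : Set α) : Prop :=
  C ⊆ M.E ∧ ¬ M.Indep C ∧ ∀ x ∈ C, M.Indep (C \ {x})

/-- A cocircuit: a circuit of the dual. -/
def Matroid.IsCocct (M : Matroid α) (C : Set α) : Prop := (M✶).IsCct C

/-- A loopless matroid. -/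
def Matroid.Loopless' (M : Matroid α) : Prop := ∀ e ∈ M.E, M.Indep {e}

/-- A simple matroid: loopless and no 2-element circuits. -/
def Matroid.Simple' (M : Matroid α) : Prop :=
  M.Loopless' ∧ ∀ e ∈ M.E, ∀ f ∈ M.E, e ≠ f → M.Indep {e, f}

/-- `M'` is a parallel extension of `M`. -/
def Matroid.IsParallelExt (M M' : Matroid α) : Prop :=
  ∃ e C, e ∈ M'.E ∧ M'.IsCct C ∧ C.ncard = 2 ∧ e ∈ C ∧ M'.del {e} = M

/-- `M'` is a series extension of `M`. -/
def Matroid.IsSeriesExt (M M' : Matroid α) : Prop :=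
  ∃ e C, e ∈ M'.E ∧ M'.IsCocct C ∧ C.ncard = 2 ∧ e ∈ C ∧ M'.ctr {e} = M

/-- Series-parallel matroids: generated from a single loop or coloop by
series and parallel extensions. -/
inductive Matroid.IsSeriesParallel : Matroid α → Prop
  | loop (e : α) : Matroid.IsSeriesParallel (Matroid.loopyOn {e})
  | coloop (e : α) : Matroid.IsSeriesParallel (Matroid.freeOn {e})
  | parallel {M M' : Matroid α} : Matroid.IsSeriesParallel M →
      M.IsParallelExt M' → Matroid.IsSeriesParallel M'
  | series {M M' : Matroid α} : Matroid.IsSeriesParallel M →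
      M.IsSeriesExt M' → Matroid.IsSeriesParallel M'

/-- `N` is a minor of `M`. -/
def Matroid.IsMinorOf (N M : Matroid α) : Prop :=
  ∃ C D, C ⊆ M.E ∧ D ⊆ M.E ∧ N = (M.ctr C).del D

/-- Isomorphism of matroids on possibly different types. -/
def Matroid.IsIsoTo (M : Matroid α) (N : Matroid β) : Prop :=
  ∃ f : α → β, Set.BijOn f M.E N.E ∧ ∀ I ⊆ M.E, (M.Indep I ↔ N.Indep (f '' I))

/-- `N` is (isomorphic to) the uniform matroid `U_{2,4}`. -/
def Matroid.IsU24 (N : Matroid β) : Prop :=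
  N.E.ncard = 4 ∧ ∀ I ⊆ N.E, (N.Indep I ↔ I.ncard ≤ 2)

/-- `N` is (isomorphic to) the cycle matroid of the complete graph `K₄`. -/
def Matroid.IsMK4 (N : Matroid β) : Prop :=
  ∃ f : β → Sym2 (Fin 4), Set.BijOn f N.E {e : Sym2 (Fin 4) | ¬ e.IsDiag} ∧
    ∀ I ⊆ N.E, (N.Indep I ↔ (SimpleGraph.fromEdgeSet (f '' I)).IsAcyclic)

/-- A quasi series-parallel matroid: no `U_{2,4}`- or `M(K₄)`-minor. -/
def Matroid.IsQuasiSP (M : Matroid α) : Prop :=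
  ¬ ∃ N : Matroid α, N.IsMinorOf M ∧ (N.IsU24 ∨ N.IsMK4)

/-- One step of the connectivity relation: lying on a common circuit. -/
def Matroid.ConnStep (M : Matroid α) (e f : α) : Prop :=
  ∃ C, M.IsCct C ∧ e ∈ C ∧ f ∈ C

/-- The connected component of `e` in `M`. -/
def Matroid.comp (M : Matroid α) (e : α) : Set α :=
  {f ∈ M.E | Relation.ReflTransGen M.ConnStep e f}

/-- A connected matroid. -/
def Matroid.IsConnected' (M : Matroid α) : Prop :=
  M.E.Nonempty ∧ ∀ e ∈ M.E, ∀ f ∈ M.E, Relation.ReflTransGen M.ConnStep e f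

/-- A polynomial is palindromic of degree `d`. -/
def IsPalindromic (d : ℕ) {R : Type*} [Semiring R] (p : Polynomial R) : Prop :=
  p.natDegree = d ∧ ∀ i ≤ d, p.coeff i = p.coeff (d - i)

/-- The defining axioms of the (non-equivariant) Kazhdan–Lusztig polynomial of
matroids, for an assignment `P` of a polynomial to every matroid on `α`. -/
def IsKLAssignment (P : Matroid α → Polynomial ℤ) : Prop :=
  (∀ M : Matroid α, M.Finite → M.Loopless' → M.rank = 0 → P M = 1) ∧
  (∀ M : Matroid α, M.Finite → M.Loopless' → 0 < M.rank →
      2 * (P M).natDegree < M.rank) ∧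
  (∀ M : Matroid α, M.Finite → M.Loopless' →
      IsPalindromic M.rank (∑ᶠ F ∈ {F | M.IsFlat F}, X ^ (M.rkSet F) * P (M.ctr F)))

/-- The `Z`-polynomial associated to an assignment `P`. -/
noncomputable def ZPoly (P : Matroid α → Polynomial ℤ) (M : Matroid α) : Polynomial ℤ :=
  ∑ᶠ F ∈ {F | M.IsFlat F}, X ^ (M.rkSet F) * P (M.ctr F)

/-- The braid matroid on `n` vertices: the cycle matroid of the complete graph `Kₙ`,
with ground set the set of non-diagonal elements of `Sym2 (Fin n)`. -/
def IsBraid (n : ℕ) (B : Matroid (Sym2 (Fin n))) : Prop :=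
  B.E = {e : Sym2 (Fin n) | ¬ e.IsDiag} ∧
  ∀ I ⊆ B.E, (B.Indep I ↔ (SimpleGraph.fromEdgeSet I).IsAcyclic)

/-- Stirling numbers of the second kind. -/
def stirling2 : ℕ → ℕ → ℕ
  | 0, 0 => 1
  | 0, _ + 1 => 0
  | _ + 1, 0 => 0
  | n + 1, k + 1 => (k + 1) * stirling2 n (k + 1) + stirling2 n k

/-- A triangular cactus: a connected graph in which every edge lies in a (unique)
cycle, and every cycle is a triangle. -/
def IsTriangularCactus {V : Type*} (G : SimpleGraph V) : Prop :=
  G.Connected ∧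
  (∀ e ∈ G.edgeSet, ∃ (v : V) (w : G.Walk v v), w.IsCycle ∧ w.length = 3 ∧ e ∈ w.edges) ∧
  (∀ (v : V) (w : G.Walk v v), w.IsCycle → w.length = 3)

/-! ### Auxiliary development -/

section Aux

variable {M : Matroid α} {I B C S : Set α} {e g : α}

lemma aux_del_indep_iff {D I : Set α} :
    (M.del D).Indep I ↔ M.Indep I ∧ I ⊆ M.E \ D :=
  Matroid.restrict_indep_iff

lemma aux_ctr_ground (M : Matroid α) (C : Set α) : (M.ctr C).E = M.E \ C := rfl

lemma aux_pair_diff_left (h : e ≠ g) : ({e, g} : Set α) \ {e} = {g} := by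
  ext x
  simp only [Set.mem_diff, Set.mem_insert_iff, Set.mem_singleton_iff]
  constructor
  · rintro ⟨rfl | rfl, hx⟩
    · exact absurd rfl hx
    · rfl
  · rintro rfl
    exact ⟨Or.inr rfl, fun hx => h hx.symm⟩

lemma aux_pair_diff_right (h : e ≠ g) : ({e, g} : Set α) \ {g} = {e} := by
  rw [Set.pair_comm]; exact aux_pair_diff_left h.symm

/-- Independence in the contraction of a single non-loop element. -/
lemma aux_ctr_indep_iff (he : M.Indep {e}) {I : Set α} :
    (M.ctr {e}).Indep I ↔ e ∉ I ∧ M.Indep (insert e I) := by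
  have heE : e ∈ M.E := he.subset_ground rfl
  set R : Set α := M.E \ {e} with hR
  have hRE : R ⊆ M✶.E := by rw [Matroid.dual_ground]; exact Set.diff_subset
  have hctr : M.ctr {e} = (M✶ ↾ R)✶ := by
    simp only [Matroid.ctr, Matroid.del, Matroid.dual_ground]
    rfl
  rw [hctr]
  constructor
  · intro hI
    obtain ⟨hIR, B, hB, hdisj⟩ := Matroid.dual_indep_iff_exists'.mp hI
    rw [Matroid.restrict_ground_eq] at hIR
    have hBbasis : M✶.IsBasis B R := (Matroid.isBase_restrict_iff hRE).mp hB
    obtain ⟨Bs, hBs, hBBs⟩ := hBbasis.indep.exists_isBase_superset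
    have hBsub : Bs ⊆ insert e B := by
      intro x hx
      by_contra hxB
      simp only [Set.mem_insert_iff, not_or] at hxB
      have hxR : x ∈ R := ⟨hBs.subset_ground hx, hxB.1⟩
      have heq : B = insert x B := hBbasis.eq_of_subset_indep
        (hBs.indep.subset (Set.insert_subset hx hBBs)) (Set.subset_insert _ _)
        (Set.insert_subset hxR hBbasis.subset)
      exact hxB.2 (heq ▸ Set.mem_insert x B)
    by_cases heBs : e ∈ Bs
    · exfalso
      have hB₂ : M.IsBase (M.E \ Bs) := hBs.compl_isBase_of_dual
      obtain ⟨B₃, hB₃, heB₃, hB₃sub⟩ := he.exists_isBase_subset_union_isBase hB₂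
      have heB₃' : e ∈ B₃ := heB₃ rfl
      have hnsub : ¬ (M.E \ Bs) ⊆ B₃ := by
        intro hss
        have heq := hB₂.eq_of_subset_isBase hB₃ hss
        rw [← heq] at heB₃'
        exact heB₃'.2 heBs
      obtain ⟨x, hx2, hx3⟩ := Set.not_subset.mp hnsub
      have hxR : x ∈ R := ⟨hx2.1, fun hxe => hx3 (by rwa [Set.mem_singleton_iff.mp hxe])⟩
      have hxB : x ∉ B := fun h => hx2.2 (hBBs h)
      have hcompl : M✶.IsBase (M.E \ B₃) := hB₃.compl_isBase_dual
      have hBsub₃ : insert x B ⊆ M.E \ B₃ := by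
        refine Set.insert_subset ⟨hx2.1, hx3⟩ ?_
        intro b hb
        refine ⟨(hBbasis.subset hb).1, fun hbB₃ => ?_⟩
        rcases hB₃sub hbB₃ with hbe | hb2
        · exact (hBbasis.subset hb).2 hbe
        · exact hb2.2 (hBBs hb)
      have heq : B = insert x B := hBbasis.eq_of_subset_indep
        (hcompl.indep.subset hBsub₃) (Set.subset_insert _ _)
        (Set.insert_subset hxR hBbasis.subset)
      exact hxB (heq ▸ Set.mem_insert x B)
    · have hBsB : Bs ⊆ B := fun x hx => by
        rcases hBsub hx with rfl | h
        · exact absurd hx heBs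
        · exact h
      have hBbase : M✶.IsBase B := by rwa [← hBBs.antisymm hBsB] at hBs
      have hB₀ : M.IsBase (M.E \ B) := hBbase.compl_isBase_of_dual
      refine ⟨fun heI => (hIR heI).2 rfl, hB₀.indep.subset ?_⟩
      refine Set.insert_subset ⟨heE, fun h => (hBbasis.subset h).2 rfl⟩ ?_
      exact fun x hx => ⟨(hIR hx).1, fun hxB => (Set.disjoint_left.mp hdisj hx) hxB⟩
  · rintro ⟨heI, hins⟩
    obtain ⟨B₀, hB₀, hsub⟩ := hins.exists_isBase_superset
    have heB₀ : e ∈ B₀ := hsub (Set.mem_insert e I)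
    have hBdual : M✶.IsBase (M.E \ B₀) := hB₀.compl_isBase_dual
    have hcsub : M.E \ B₀ ⊆ R := fun x hx => ⟨hx.1, fun hxe => hx.2 (by rwa [Set.mem_singleton_iff.mp hxe])⟩
    have hbasis : M✶.IsBasis (M.E \ B₀) R := hBdual.isBasis_of_subset hRE hcsub
    rw [Matroid.dual_indep_iff_exists']
    refine ⟨?_, M.E \ B₀, (Matroid.isBase_restrict_iff hRE).mpr hbasis, ?_⟩
    · rw [Matroid.restrict_ground_eq]
      exact fun x hx => ⟨hins.subset_ground (Set.mem_insert_of_mem _ hx),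
        fun hxe => heI (by rwa [Set.mem_singleton_iff.mp hxe] at hx)⟩
    · exact Set.disjoint_left.mpr fun x hx hx' => hx'.2 (hsub (Set.mem_insert_of_mem _ hx))

/-- Key lemma: if `{e, g}` is a cocircuit, then every circuit containing `e`
contains `g`. -/
lemma aux_cocircuit_key (hco : M.IsCocct {e, g}) (hge : g ≠ e)
    (hC : M.IsCct C) (heC : e ∈ C) : g ∈ C := by
  by_contra hgC
  obtain ⟨hsub, hdep, hmin⟩ := hco
  rw [Matroid.dual_ground] at hsub
  have heE : e ∈ M.E := hsub (Set.mem_insert e _)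
  have hgE : g ∈ M.E := hsub (Set.mem_insert_of_mem _ rfl)
  have hgind : M✶.Indep {g} := by
    have := hmin e (Set.mem_insert e _)
    rwa [aux_pair_diff_left hge.symm] at this
  set N := M.del {g} with hN
  -- `{e}` is not independent in `N✶`
  have hNdual : ¬ N✶.Indep {e} := by
    have hNd : N✶ = (M✶).ctr {g} := by
      rw [hN]
      simp only [Matroid.ctr, Matroid.del, Matroid.dual_dual]
    rw [hNd, aux_ctr_indep_iff hgind]
    rintro ⟨-, h⟩
    exact hdep (h.subset (by intro x hx; rcases hx with rfl | rfl <;> simp))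
  -- hence every base of `N` contains `e`
  have heN : e ∈ N.E := ⟨heE, fun h => hgC (by rwa [Set.mem_singleton_iff.mp h] at heC)⟩
  have hCN : C \ {e} ⊆ N.E := by
    intro x hx
    exact ⟨hC.1 hx.1, fun h => hgC (by rw [← Set.mem_singleton_iff.mp h]; exact hx.1)⟩
  have hCe : N.Indep (C \ {e}) := by
    rw [hN, aux_del_indep_iff]
    exact ⟨hC.2.2 e heC, fun x hx => ⟨hC.1 hx.1, fun h => hgC (by
      rw [Set.mem_singleton_iff.mp h] at hx; exact hx.1)⟩⟩
  obtain ⟨B, hB, hsubB⟩ := hCe.exists_isBase_superset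
  have heB : e ∈ B := by
    by_contra heB
    exact hNdual (Matroid.dual_indep_iff_exists (Set.singleton_subset_iff.mpr heN) |>.mpr
      ⟨B, hB, Set.disjoint_singleton_left.mpr heB⟩)
  have hCB : C ⊆ B := by
    intro x hx
    by_cases hxe : x = e
    · exact hxe ▸ heB
    · exact hsubB ⟨hx, hxe⟩
  have : M.Indep C := ((hB.indep.subset hCB).of_restrict)
  exact hC.2.1 this

/-- Parallel exchange: swapping an element for its parallel mate preserves
independence. -/
lemma aux_parallel_swap (hcct : M.IsCct {e, g}) (hge : g ≠ e)
    (hI : M.Indep I) (heI : e ∈ I) (hgI : g ∉ I) :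
    M.Indep (insert g (I \ {e})) := by
  have hgE : g ∈ M.E := hcct.1 (Set.mem_insert_of_mem _ rfl)
  have hIe : M.Indep (I \ {e}) := hI.diff _
  by_contra hdep
  have hgnot : g ∉ I \ {e} := fun h => hgI h.1
  have hg : g ∈ M.closure (I \ {e}) := by
    have h1 := hIe.insert_indep_iff_of_notMem hgnot
    by_contra hg
    exact hdep (h1.mpr ⟨hgE, hg⟩)
  have hgind : M.Indep {g} := by
    have := hcct.2.2 e (Set.mem_insert e _)
    rwa [aux_pair_diff_left hge.symm] at this
  have hedep : M.Dep (insert e {g}) := by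
    refine ⟨?_, ?_⟩
    · intro h
      exact hcct.2.1 (h.subset (by intro x hx; rcases hx with rfl | rfl <;> simp))
    · exact Set.insert_subset (hcct.1 (Set.mem_insert e _)) (Set.singleton_subset_iff.mpr hgE)
  have hecl : e ∈ M.closure {g} := (hgind.insert_dep_iff.mp hedep).1
  have hecl' : e ∈ M.closure (I \ {e}) := by
    have hsub : M.closure {g} ⊆ M.closure (I \ {e}) :=
      Matroid.closure_subset_closure_of_subset_closure (Set.singleton_subset_iff.mpr hg)
    exact hsub hecl
  have : M.Dep (insert e (I \ {e})) :=
    hIe.insert_dep_iff.mpr ⟨hecl', by simp⟩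
  rw [Set.insert_diff_singleton, Set.insert_eq_self.mpr heI] at this
  exact this.not_indep hI

lemma aux_bddAbove (hfin : M.Finite) (X : Set α) :
    BddAbove {n | ∃ I, M.Indep I ∧ I ⊆ X ∧ I.ncard = n} := by
  refine ⟨M.E.ncard, fun n hn => ?_⟩
  obtain ⟨I, hI, -, rfl⟩ := hn
  exact Set.ncard_le_ncard hI.subset_ground hfin.ground_finite

lemma aux_ncard_le_rank (hfin : M.Finite) (hI : M.Indep I) : I.ncard ≤ M.rank :=
  le_csSup (aux_bddAbove hfin M.E) ⟨I, hI, hI.subset_ground, rfl⟩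

lemma aux_rank_eq_ncard_base (hfin : M.Finite) (hB : M.IsBase B) : M.rank = B.ncard := by
  refine le_antisymm (csSup_le ⟨0, ∅, M.empty_indep, Set.empty_subset _, by simp⟩ ?_)
    (aux_ncard_le_rank hfin hB.indep)
  rintro n ⟨I, hI, -, rfl⟩
  obtain ⟨B', hB', hIB'⟩ := hI.exists_isBase_superset
  have hB'fin : B'.Finite := hfin.ground_finite.subset hB'.subset_ground
  calc I.ncard ≤ B'.ncard := Set.ncard_le_ncard hIB' hB'fin
    _ = B.ncard := hB'.ncard_eq_ncard_of_isBase hB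

lemma aux_ctr_finite (hfin : M.Finite) (C : Set α) : (M.ctr C).Finite :=
  ⟨by rw [aux_ctr_ground]; exact hfin.ground_finite.diff⟩

lemma aux_del_finite (hfin : M.Finite) (D : Set α) : (M.del D).Finite :=
  ⟨hfin.ground_finite.diff⟩

/-- Contracting a non-loop drops the rank by exactly one. -/
lemma aux_rank_ctr (hfin : M.Finite) (he : M.Indep {e}) :
    M.rank = (M.ctr {e}).rank + 1 := by
  obtain ⟨B₀, hB₀, hsub⟩ := he.exists_isBase_superset
  have heB₀ : e ∈ B₀ := hsub rfl
  have hN : (M.ctr {e}).IsBase (B₀ \ {e}) := by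
    refine Matroid.Indep.isBase_of_maximal ?_ ?_
    · rw [aux_ctr_indep_iff he]
      refine ⟨fun h => h.2 rfl, ?_⟩
      rw [Set.insert_diff_singleton, Set.insert_eq_self.mpr heB₀]
      exact hB₀.indep
    · intro J hJ hBJ
      rw [aux_ctr_indep_iff he] at hJ
      obtain ⟨heJ, hJind⟩ := hJ
      have hB₀sub : B₀ ⊆ insert e J := by
        intro x hx
        by_cases hxe : x = e
        · exact hxe ▸ Set.mem_insert e J
        · exact Set.mem_insert_of_mem _ (hBJ ⟨hx, hxe⟩)
      have heq : B₀ = insert e J := hB₀.eq_of_subset_indep hJind hB₀sub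
      rw [heq, Set.insert_diff_self_of_notMem heJ]
  have hNfin := aux_ctr_finite hfin ({e} : Set α)
  rw [aux_rank_eq_ncard_base hfin hB₀, aux_rank_eq_ncard_base hNfin hN]
  have hBfin : B₀.Finite := hfin.ground_finite.subset hB₀.subset_ground
  rw [Set.ncard_diff_singleton_add_one heB₀ hBfin]

/-- Deleting an element with a parallel mate preserves the rank. -/
lemma aux_rank_del_parallel (hfin : M.Finite) (hcct : M.IsCct {e, g}) (hge : g ≠ e) :
    (M.del {e}).rank = M.rank := by
  have hgE : g ∈ M.E := hcct.1 (Set.mem_insert_of_mem _ rfl)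
  have hnonempty : ∀ (N : Matroid α),
      Set.Nonempty {n | ∃ I, N.Indep I ∧ I ⊆ N.E ∧ I.ncard = n} :=
    fun N => ⟨0, ∅, N.empty_indep, Set.empty_subset _, by simp⟩
  refine le_antisymm (csSup_le (hnonempty _) ?_) (csSup_le (hnonempty _) ?_)
  · rintro n ⟨I, hI, -, rfl⟩
    rw [aux_del_indep_iff] at hI
    exact aux_ncard_le_rank hfin hI.1
  · rintro n ⟨I, hI, -, rfl⟩
    have hIfin : I.Finite := hfin.ground_finite.subset hI.subset_ground
    by_cases heI : e ∈ I
    · have hgI : g ∉ I := by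
        intro hgI
        exact hcct.2.1 (hI.subset (by
          intro x hx; rcases hx with rfl | rfl <;> assumption))
      have hJ : M.Indep (insert g (I \ {e})) := aux_parallel_swap hcct hge hI heI hgI
      have hJdel : (M.del {e}).Indep (insert g (I \ {e})) := by
        rw [aux_del_indep_iff]
        refine ⟨hJ, ?_⟩
        refine Set.insert_subset ⟨hgE, fun h => hge (Set.mem_singleton_iff.mp h)⟩ ?_
        exact fun x hx => ⟨hI.subset_ground hx.1, hx.2⟩
      have hcard : (insert g (I \ {e})).ncard = I.ncard := by
        rw [Set.ncard_insert_of_notMem (fun h => hgI h.1) hIfin.diff,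
          Set.ncard_diff_singleton_add_one heI hIfin]
      exact hcard ▸ le_csSup (aux_bddAbove (aux_del_finite hfin _) _)
        ⟨_, hJdel, hJdel.subset_ground, rfl⟩
    · have hIdel : (M.del {e}).Indep I := by
        rw [aux_del_indep_iff]
        exact ⟨hI, fun x hx => ⟨hI.subset_ground hx,
          fun h => heI (by rwa [Set.mem_singleton_iff.mp h] at hx)⟩⟩
      exact le_csSup (aux_bddAbove (aux_del_finite hfin _) _)
        ⟨I, hIdel, hIdel.subset_ground, rfl⟩

lemma aux_pair_of_mem (h2 : C.ncard = 2) (heC : e ∈ C) : ∃ g, g ≠ e ∧ C = {e, g} := by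
  obtain ⟨a, b, hab, rfl⟩ := Set.ncard_eq_two.mp h2
  rw [Set.mem_insert_iff, Set.mem_singleton_iff] at heC
  rcases heC with rfl | rfl
  · exact ⟨b, hab.symm, rfl⟩
  · exact ⟨a, hab, Set.pair_comm a e⟩

/-- The main induction: any series-parallel matroid is finite, and any
"simple subset" of its ground set has size at most `max 1 (2 rank - 1)`. -/
lemma aux_main {M : Matroid α} (hsp : M.IsSeriesParallel) :
    M.Finite ∧ ∀ S ⊆ M.E, (∀ a ∈ S, M.Indep {a}) →
      (∀ a ∈ S, ∀ b ∈ S, a ≠ b → M.Indep {a, b}) →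
      S.ncard ≤ max 1 (2 * M.rank - 1) := by
  induction hsp with
  | loop x =>
    refine ⟨⟨by simp⟩, fun S hS h1 h2 => ?_⟩
    have hSe : S = ∅ := by
      rw [Set.eq_empty_iff_forall_notMem]
      intro a ha
      have := h1 a ha
      rw [Matroid.loopyOn_indep_iff] at this
      exact (Set.singleton_ne_empty a) this
    rw [hSe, Set.ncard_empty]
    exact Nat.zero_le _
  | coloop x =>
    refine ⟨⟨by simp⟩, fun S hS h1 h2 => ?_⟩
    have h1' : S.ncard ≤ 1 := by
      have := Set.ncard_le_ncard (show S ⊆ {x} from hS) (Set.finite_singleton x)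
      simpa using this
    exact le_trans h1' (le_max_left _ _)
  | @parallel N N' hN hext ih =>
    obtain ⟨e, C, heE, hC, h2, heC, hdel⟩ := hext
    obtain ⟨g, hge, rfl⟩ := aux_pair_of_mem h2 heC
    have hgE : g ∈ N'.E := hC.1 (Set.mem_insert_of_mem _ rfl)
    have hE : N.E = N'.E \ {e} := by rw [← hdel]; rfl
    have hfin' : N'.Finite := by
      refine ⟨Set.Finite.subset (ih.1.ground_finite.union (Set.finite_singleton e)) ?_⟩
      rw [hE]
      intro x hx
      by_cases hxe : x = e
      · exact Or.inr (by simp [hxe])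
      · exact Or.inl ⟨hx, hxe⟩
    have hrank : N.rank = N'.rank := by
      rw [← hdel]; exact aux_rank_del_parallel hfin' hC hge
    have hNdel : ∀ J, N'.Indep J → e ∉ J → N.Indep J := by
      intro J h heJ
      rw [← hdel]
      exact aux_del_indep_iff.mpr ⟨h, fun x hx => ⟨h.subset_ground hx,
        fun hh => heJ ((Set.mem_singleton_iff.mp hh) ▸ hx)⟩⟩
    refine ⟨hfin', fun S hS h1 h2' => ?_⟩
    by_cases heS : e ∈ S
    · have hgS : g ∉ S := fun hgS => hC.2.1 (h2' e heS g hgS hge.symm)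
      have hgind : N'.Indep {g} := by
        have := hC.2.2 e (Set.mem_insert e _)
        rwa [aux_pair_diff_left hge.symm] at this
      set S₀ : Set α := insert g (S \ {e}) with hS₀def
      have hS₀ : S₀ ⊆ N.E := by
        rw [hE]
        intro x hx
        rw [hS₀def, Set.mem_insert_iff] at hx
        rcases hx with rfl | hx
        · exact ⟨hgE, fun h => hge (Set.mem_singleton_iff.mp h)⟩
        · exact ⟨hS hx.1, hx.2⟩
      have hpair₀ : ∀ a ∈ S \ {e}, N'.Indep {g, a} := by
        intro a ha
        have hae : a ≠ e := fun h => ha.2 (h ▸ rfl)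
        have hag : a ≠ g := fun h => hgS (h ▸ ha.1)
        have hI : N'.Indep {e, a} := h2' e heS a ha.1 hae.symm
        have hgI : g ∉ ({e, a} : Set α) := by
          simp only [Set.mem_insert_iff, Set.mem_singleton_iff]
          rintro (h | h)
          · exact hge h
          · exact hag h.symm
        have hswap := aux_parallel_swap hC hge hI (Set.mem_insert _ _) hgI
        rwa [aux_pair_diff_left hae.symm] at hswap
      have h1₀ : ∀ a ∈ S₀, N.Indep {a} := by
        intro a ha
        rw [hS₀def, Set.mem_insert_iff] at ha
        rcases ha with rfl | ha
        · exact hNdel _ hgind (fun h => hge (Set.mem_singleton_iff.mp h).symm)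
        · exact hNdel _ (h1 a ha.1) (fun h => ha.2 ((Set.mem_singleton_iff.mp h).symm))
      have h2₀ : ∀ a ∈ S₀, ∀ b ∈ S₀, a ≠ b → N.Indep {a, b} := by
        intro a ha b hb hab
        rw [hS₀def, Set.mem_insert_iff] at ha hb
        have hane : ∀ c, c = g ∨ c ∈ S \ {e} → c ≠ e := by
          rintro c (rfl | hc)
          · exact fun h => hge h
          · exact fun h => hc.2 h
        have habind : N'.Indep {a, b} := by
          rcases ha with rfl | ha
          · rcases hb with rfl | hb
            · exact absurd rfl hab
            · exact hpair₀ b hb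
          · rcases hb with rfl | hb
            · rw [Set.pair_comm]; exact hpair₀ a ha
            · exact h2' a ha.1 b hb.1 hab
        refine hNdel _ habind ?_
        simp only [Set.mem_insert_iff, Set.mem_singleton_iff]
        rintro (h | h)
        · exact hane a ha h.symm
        · exact hane b hb h.symm
      have hSfin : S.Finite := hfin'.ground_finite.subset hS
      have hcard₀ : S₀.ncard = S.ncard := by
        rw [hS₀def, Set.ncard_insert_of_notMem (fun h => hgS h.1) hSfin.diff,
          Set.ncard_diff_singleton_add_one heS hSfin]
      have hIH := ih.2 S₀ hS₀ h1₀ h2₀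
      rw [hrank] at hIH
      rwa [← hcard₀]
    · have hSsub : S ⊆ N.E := by
        rw [hE]
        exact fun x hx => ⟨hS hx, fun h => heS ((Set.mem_singleton_iff.mp h) ▸ hx)⟩
      have hIH := ih.2 S hSsub
        (fun a ha => hNdel _ (h1 a ha) (fun h => heS ((Set.mem_singleton_iff.mp h) ▸ ha)))
        (fun a ha b hb hab => hNdel _ (h2' a ha b hb hab) (by
          simp only [Set.mem_insert_iff, Set.mem_singleton_iff]
          rintro (rfl | rfl)
          · exact heS ha
          · exact heS hb))
      rwa [hrank] at hIH
  | @series N N' hN hext ih =>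
    obtain ⟨e, C, heE, hco, h2, heC, hctr⟩ := hext
    obtain ⟨g, hge, rfl⟩ := aux_pair_of_mem h2 heC
    have hsubE : ({e, g} : Set α) ⊆ N'.E := by
      have := hco.1; rwa [Matroid.dual_ground] at this
    have hgE : g ∈ N'.E := hsubE (Set.mem_insert_of_mem _ rfl)
    have hE : N.E = N'.E \ {e} := by rw [← hctr]; rfl
    have hfin' : N'.Finite := by
      refine ⟨Set.Finite.subset (ih.1.ground_finite.union (Set.finite_singleton e)) ?_⟩
      rw [hE]
      intro x hx
      by_cases hxe : x = e
      · exact Or.inr (by simp [hxe])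
      · exact Or.inl ⟨hx, hxe⟩
    have henl : N'.Indep {e} := by
      by_contra hdep
      have hcct : N'.IsCct {e} := by
        refine ⟨Set.singleton_subset_iff.mpr heE, hdep, ?_⟩
        intro x hx
        rw [Set.mem_singleton_iff.mp hx]
        simpa using N'.empty_indep
      have := aux_cocircuit_key hco hge hcct rfl
      exact hge (Set.mem_singleton_iff.mp this)
    have hrank : N'.rank = N.rank + 1 := by
      rw [← hctr]; exact aux_rank_ctr hfin' henl
    refine ⟨hfin', fun S hS h1 h2' => ?_⟩
    by_cases hr : N'.rank ≤ 1
    · have hss : S.Subsingleton := by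
        intro a ha b hb
        by_contra hab
        have hind := h2' a ha b hb hab
        have hc2 : ({a, b} : Set α).ncard = 2 := Set.ncard_pair hab
        have := aux_ncard_le_rank hfin' hind
        omega
      rcases hss.eq_empty_or_singleton with rfl | ⟨a, rfl⟩
      · rw [Set.ncard_empty]; exact Nat.zero_le _
      · rw [Set.ncard_singleton]; exact le_max_left _ _
    · push_neg at hr
      have hpair : ∀ a ∈ S, a ≠ e → a ≠ g → N'.Indep {e, a} := by
        intro a ha hae hag
        by_contra hdep
        have hcct : N'.IsCct {e, a} := by
          refine ⟨Set.insert_subset heE (Set.singleton_subset_iff.mpr (hS ha)), hdep, ?_⟩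
          intro x hx
          simp only [Set.mem_insert_iff, Set.mem_singleton_iff] at hx
          rcases hx with rfl | rfl
          · rw [aux_pair_diff_left hae.symm]
            exact h1 a ha
          · rw [aux_pair_diff_right hae.symm]
            exact henl
        have hgmem := aux_cocircuit_key hco hge hcct (Set.mem_insert _ _)
        simp only [Set.mem_insert_iff, Set.mem_singleton_iff] at hgmem
        rcases hgmem with h | h
        · exact hge h
        · exact hag h.symm
      set S' : Set α := S \ ({e, g} : Set α) with hS'def
      have hmem : ∀ x ∈ S', x ≠ e ∧ x ≠ g := by
        intro x hx
        rw [hS'def] at hx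
        exact ⟨fun h => hx.2 (by simp [h]), fun h => hx.2 (by simp [h])⟩
      have hS'sub : S' ⊆ N.E := by
        rw [hE]
        intro x hx
        exact ⟨hS hx.1, fun h => (hmem x hx).1 (Set.mem_singleton_iff.mp h)⟩
      have hNind : ∀ J, e ∉ J → N'.Indep (insert e J) → N.Indep J := by
        intro J hJ h
        rw [← hctr, aux_ctr_indep_iff henl]
        exact ⟨hJ, h⟩
      have h1' : ∀ a ∈ S', N.Indep {a} := by
        intro a ha
        obtain ⟨hae, hag⟩ := hmem a ha
        refine hNind _ (fun h => hae (Set.mem_singleton_iff.mp h).symm) ?_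
        exact hpair a ha.1 hae hag
      have h2'' : ∀ a ∈ S', ∀ b ∈ S', a ≠ b → N.Indep {a, b} := by
        intro a ha b hb hab
        obtain ⟨hae, hag⟩ := hmem a ha
        obtain ⟨hbe, hbg⟩ := hmem b hb
        refine hNind _ ?_ ?_
        · simp only [Set.mem_insert_iff, Set.mem_singleton_iff]
          rintro (h | h)
          · exact hae h.symm
          · exact hbe h.symm
        · by_contra hdep
          have hcct : N'.IsCct {e, a, b} := by
            refine ⟨Set.insert_subset heE (Set.insert_subset (hS ha.1)
              (Set.singleton_subset_iff.mpr (hS hb.1))), hdep, ?_⟩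
            intro x hx
            simp only [Set.mem_insert_iff, Set.mem_singleton_iff] at hx
            rcases hx with rfl | rfl | rfl
            · rw [Set.insert_diff_self_of_notMem (by
                simp only [Set.mem_insert_iff, Set.mem_singleton_iff]
                rintro (h | h)
                · exact hae h.symm
                · exact hbe h.symm)]
              exact h2' a ha.1 b hb.1 hab
            · rw [Set.insert_diff_of_notMem _
                (fun h => hae (Set.mem_singleton_iff.mp h).symm),
                aux_pair_diff_left hab]
              exact hpair b hb.1 hbe hbg
            · rw [Set.insert_diff_of_notMem _
                (fun h => hbe (Set.mem_singleton_iff.mp h).symm),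
                aux_pair_diff_right hab]
              exact hpair a ha.1 hae hag
          have hgmem := aux_cocircuit_key hco hge hcct (Set.mem_insert _ _)
          simp only [Set.mem_insert_iff, Set.mem_singleton_iff] at hgmem
          rcases hgmem with h | h | h
          · exact hge h
          · exact hag h.symm
          · exact hbg h.symm
      have hIH := ih.2 S' hS'sub h1' h2''
      have hSfin : S.Finite := hfin'.ground_finite.subset hS
      have hcard : S.ncard ≤ S'.ncard + 2 := by
        have hsub2 : S ⊆ S' ∪ {e, g} := by
          intro x hx
          by_cases h : x ∈ ({e, g} : Set α)
          · exact Or.inr h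
          · exact Or.inl ⟨hx, h⟩
        have hfin2 : (S' ∪ ({e, g} : Set α)).Finite :=
          hSfin.diff.union ((Set.finite_singleton g).insert e)
        calc S.ncard ≤ (S' ∪ ({e, g} : Set α)).ncard := Set.ncard_le_ncard hsub2 hfin2
          _ ≤ S'.ncard + ({e, g} : Set α).ncard := Set.ncard_union_le _ _
          _ ≤ S'.ncard + 2 := by
              have := Set.ncard_insert_le e ({g} : Set α)
              rw [Set.ncard_singleton] at this
              omega
      have hmax1 : max 1 (2 * N.rank - 1) = 2 * N.rank - 1 :=
        Nat.max_eq_right (by omega)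
      have hmax2 : max 1 (2 * N'.rank - 1) = 2 * N'.rank - 1 :=
        Nat.max_eq_right (by omega)
      rw [hmax1] at hIH
      rw [hmax2]
      omega

end Aux

/-- A simple connected series-parallel matroid on a nonempty ground set of size `n`
has rank at least `⌈(n+1)/2⌉`. -/
theorem simple_seriesParallel_rank_bound {α : Type*} (M : Matroid α)
    (hfin : M.Finite) (hs : M.Simple') (hconn : M.IsConnected')
    (hsp : M.IsSeriesParallel) (hne : M.E.Nonempty) :
    (M.E.ncard + 2) / 2 ≤ M.rank := by
  obtain ⟨-, hbound⟩ := aux_main hsp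
  have h := hbound M.E subset_rfl (fun a ha => hs.1 a ha)
    (fun a ha b hb hab => hs.2 a ha b hb hab)
  obtain ⟨x, hx⟩ := hne
  have hr1 : 1 ≤ M.rank := by
    have := aux_ncard_le_rank hfin (hs.1 x hx)
    simpa using this
  rcases le_max_iff.mp h with h' | h' <;> omega
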